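/- For every n ≥ 3, the decycling number of the Cartesian product C₃ □ Cₙ equals n + 1: ∇(C₃ □ Cₙ) = n + 1. -/

import Mathlib

open SimpleGraph

/-- `S` is a decycling set of `G` if the subgraph of `G` induced on the complement of `S`
is acyclic. -/
def SimpleGraph.IsDecyclingSet {V : Type*} (G : SimpleGraph V) (S : Set V) : Prop :=
  (G.induce Sᶜ).IsAcyclic

/-- The decycling number `∇(G)` of `G`: the minimum cardinality of a decycling set of `G`. -/
noncomputable def SimpleGraph.decyclingNumber {V : Type*} (G : SimpleGraph V) : ℕ :=
  sInf {k | ∃ S : Set V, G.IsDecyclingSet S ∧ S.ncard = k}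

section Aux

variable {V : Type*} {G : SimpleGraph V}

/-- getVert is injective on walks with nodup support. -/
lemma aux_getVert_inj {u v : V} (p : G.Walk u v) (hnd : p.support.Nodup) :
    ∀ i j, i ≤ p.length → j ≤ p.length → p.getVert i = p.getVert j → i = j := by
  induction p with
  | nil => intro i j hi hj _; simp at hi hj; omega
  | cons h q ih =>
    rename_i a b c
    rw [Walk.support_cons, List.nodup_cons] at hnd
    intro i j hi hj hij
    match i, j with
    | 0, 0 => rfl
    | 0, j + 1 =>
      exfalso
      rw [Walk.getVert_zero, Walk.getVert_cons_succ] at hij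
      exact hnd.1 (Walk.mem_support_iff_exists_getVert.mpr ⟨j, hij.symm, by
        simpa using Nat.succ_le_succ_iff.mp hj⟩)
    | i + 1, 0 =>
      exfalso
      rw [Walk.getVert_zero, Walk.getVert_cons_succ] at hij
      exact hnd.1 (Walk.mem_support_iff_exists_getVert.mpr ⟨i, hij, by
        simpa using Nat.succ_le_succ_iff.mp hi⟩)
    | i + 1, j + 1 =>
      rw [Walk.getVert_cons_succ, Walk.getVert_cons_succ] at hij
      have := ih hnd.2 i j (by simpa using Nat.succ_le_succ_iff.mp hi)
        (by simpa using Nat.succ_le_succ_iff.mp hj) hij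
      omega

/-- A graph admitting a rank function where each vertex has at most one lower-rank
neighbor is acyclic. -/
lemma isAcyclic_of_rank (f : V → ℕ)
    (h1 : ∀ a b : V, G.Adj a b → f a ≠ f b)
    (h2 : ∀ v a b : V, G.Adj v a → G.Adj v b → f a < f v → f b < f v → a = b) :
    G.IsAcyclic := by
  intro v c hc
  classical
  have hne : c.support ≠ [] := c.support_ne_nil
  obtain ⟨m, hargmax⟩ : ∃ m, m ∈ c.support.argmax f := by
    cases hh : c.support.argmax f with
    | none => exact absurd (List.argmax_eq_none.mp hh) hne
    | some m => exact ⟨m, by simp [hh, Option.mem_def]⟩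
  have hm_mem : m ∈ c.support := List.argmax_mem hargmax
  have hmax : ∀ x ∈ c.support, f x ≤ f m := fun x hx => List.le_of_mem_argmax hx hargmax
  obtain ⟨c', hc2, hsup⟩ : ∃ c' : G.Walk m m, c'.IsCycle ∧ ∀ x ∈ c'.support, f x ≤ f m := by
    refine ⟨c.rotate m hm_mem, hc.rotate hm_mem, ?_⟩
    intro x hx
    rw [Walk.support_eq_cons] at hx
    rcases List.mem_cons.mp hx with rfl | hx
    · exact le_refl _
    · have := (Walk.support_rotate c m hm_mem).mem_iff.mp hx
      refine hmax x ?_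
      rw [Walk.support_eq_cons]
      exact List.mem_cons_of_mem _ this
  cases c' with
  | nil => simpa using hc2.three_le_length
  | cons hadj q =>
    rename_i b
    obtain ⟨hqp, -⟩ := (Walk.cons_isCycle_iff q hadj).mp hc2
    have hlen : 2 ≤ q.length := by
      have := hc2.three_le_length
      simpa using this
    set b' := q.getVert (q.length - 1) with hb'def
    have hb'adj : G.Adj b' m := by
      have := q.adj_getVert_succ (i := q.length - 1) (by omega)
      rwa [show q.length - 1 + 1 = q.length by omega, q.getVert_length] at this
    have hbb' : b ≠ b' := by
      intro hEq
      have : (0 : ℕ) = q.length - 1 := by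
        apply aux_getVert_inj q hqp.support_nodup 0 (q.length - 1) (by omega) (by omega)
        rw [q.getVert_zero, ← hb'def, hEq]
      omega
    have hbm : f b < f m :=
      lt_of_le_of_ne (hsup b (by simp [Walk.support_cons, q.start_mem_support]))
        (fun hEq => h1 m b hadj hEq.symm)
    have hb'm : f b' < f m := by
      refine lt_of_le_of_ne (hsup b' ?_) (fun hEq => h1 b' m hb'adj hEq)
      rw [Walk.support_cons]
      exact List.mem_cons_of_mem _
        (Walk.mem_support_iff_exists_getVert.mpr ⟨q.length - 1, rfl, by omega⟩)
    exact hbb' (h2 m b b' hadj hb'adj.symm hbm hb'm)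

/-- In a path starting at `v`, an edge containing `v` must be the first edge. -/
lemma aux_edge_start {u v w : V} (p : G.Walk v u) (hp : p.IsPath)
    (h : s(w, v) ∈ p.edges) : w = p.getVert 1 := by
  induction p with
  | nil => simp at h
  | cons hadj q ih =>
    rename_i a b c
    rw [Walk.edges_cons, List.mem_cons] at h
    rcases h with h | h
    · rw [Sym2.eq_iff] at h
      rcases h with ⟨rfl, rfl⟩ | ⟨rfl, -⟩
      · exact absurd rfl hadj.ne
      · simp [Walk.getVert_cons_succ]
    · exfalso
      have hmem : a ∈ q.support := Walk.snd_mem_support_of_mem_edges q h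
      exact ((Walk.cons_isPath_iff hadj q).mp hp).2 hmem

/-- A nonempty finite acyclic graph has a vertex of degree at most 1. -/
lemma aux_exists_leaf [Fintype V] [DecidableEq V] [DecidableRel G.Adj]
    (hG : G.IsAcyclic) [Nonempty V] : ∃ v : V, G.degree v ≤ 1 := by
  classical
  by_contra hdeg
  push_neg at hdeg
  have hdeg' : ∀ v : V, 2 ≤ G.degree v := fun v => hdeg v
  set N := Fintype.card V with hN
  set P : ℕ → Prop := fun k => ∃ (x y : V) (p : G.Walk x y), p.IsPath ∧ p.length = k with hP
  have h0 : P 0 := by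
    obtain ⟨x⟩ := ‹Nonempty V›
    exact ⟨x, x, Walk.nil, Walk.IsPath.nil, rfl⟩
  set k0 := Nat.findGreatest P N with hk0
  have hPk0 : P k0 := Nat.findGreatest_spec (Nat.zero_le N) h0
  obtain ⟨x, y, p, hp, hplen⟩ := hPk0
  set r := p.reverse with hr
  have hrp : r.IsPath := hp.reverse
  have hrlen : r.length = k0 := by rw [hr, Walk.length_reverse, hplen]
  have hnbr : ∀ w : V, G.Adj y w → w ∈ r.support := by
    intro w hw
    by_contra hwmem
    have hext : (Walk.cons hw.symm r).IsPath := hrp.cons hwmem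
    have hle : k0 + 1 ≤ N := by
      have := hext.length_lt
      simp only [Walk.length_cons, hrlen] at this
      omega
    have : ¬ P (k0 + 1) := Nat.findGreatest_is_greatest (lt_add_one k0) hle
    exact this ⟨w, x, Walk.cons hw.symm r, hext, by simp [Walk.length_cons, hrlen]⟩
  have h2 : 1 < (G.neighborFinset y).card := by
    have := hdeg' y
    rwa [← G.card_neighborFinset_eq_degree y] at this
  obtain ⟨w1, hw1, w2, hw2, hww⟩ := Finset.one_lt_card.mp h2
  rw [mem_neighborFinset] at hw1 hw2
  obtain ⟨w, hwadj, hwne⟩ : ∃ w, G.Adj y w ∧ w ≠ r.getVert 1 := by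
    by_cases h : w1 = r.getVert 1
    · exact ⟨w2, hw2, by rw [← h]; exact fun hh => hww hh.symm⟩
    · exact ⟨w1, hw1, h⟩
  have hwmem : w ∈ r.support := hnbr w hwadj
  set t := r.takeUntil w hwmem with ht
  have htp : t.IsPath := hrp.takeUntil hwmem
  have hcyc : (Walk.cons hwadj.symm t).IsCycle := by
    rw [Walk.cons_isCycle_iff]
    refine ⟨htp, fun hmem => ?_⟩
    have hmem' : s(w, y) ∈ r.edges := Walk.edges_takeUntil_subset r hwmem hmem
    exact hwne (aux_edge_start r hrp hmem')
  exact hG _ hcyc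

/-- Induced subgraphs of acyclic graphs are acyclic. -/
lemma aux_isAcyclic_induce (hG : G.IsAcyclic) (s : Set V) : (G.induce s).IsAcyclic := by
  intro v c hcyc
  exact hG (c.map ⟨Subtype.val, fun {a b} h => h⟩)
    (hcyc.map Subtype.val_injective)

/-- Edge splitting: edges of `G` are either incident to `S` or edges of the graph
induced on the complement. -/
lemma aux_edge_split [Fintype V] (G : SimpleGraph V) (S : Set V) (d : ℕ)
    (hd : ∀ v ∈ S, (G.neighborSet v).ncard ≤ d) :
    G.edgeSet.ncard ≤ d * S.ncard + (G.induce Sᶜ).edgeSet.ncard := by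
  classical
  set B := (G.induce Sᶜ).edgeFinset.image (Sym2.map Subtype.val) with hB
  set C := S.toFinset.biUnion (fun v => G.incidenceFinset v) with hC
  have hsub : G.edgeFinset ⊆ B ∪ C := by
    intro e he
    induction e with
    | _ x y =>
      have hadj : G.Adj x y := by rwa [mem_edgeFinset, mem_edgeSet] at he
      by_cases hx : x ∈ S
      · refine Finset.mem_union_right _ (Finset.mem_biUnion.mpr ⟨x, Set.mem_toFinset.mpr hx, ?_⟩)
        rw [mem_incidenceFinset]
        exact ⟨hadj, Sym2.mem_mk_left x y⟩
      · by_cases hy : y ∈ S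
        · refine Finset.mem_union_right _ (Finset.mem_biUnion.mpr ⟨y, Set.mem_toFinset.mpr hy, ?_⟩)
          rw [mem_incidenceFinset]
          exact ⟨hadj, Sym2.mem_mk_right x y⟩
        · refine Finset.mem_union_left _ (Finset.mem_image.mpr
            ⟨s(⟨x, hx⟩, ⟨y, hy⟩), ?_, rfl⟩)
          rw [mem_edgeFinset, mem_edgeSet]
          exact hadj
  have h1 : G.edgeSet.ncard = G.edgeFinset.card := by
    rw [← coe_edgeFinset, Set.ncard_coe_finset]
  have h2 : (G.induce Sᶜ).edgeSet.ncard = (G.induce Sᶜ).edgeFinset.card := by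
    rw [← coe_edgeFinset, Set.ncard_coe_finset]
  have hBcard : B.card ≤ (G.induce Sᶜ).edgeFinset.card := Finset.card_image_le
  have hCcard : C.card ≤ d * S.ncard := by
    calc C.card ≤ ∑ v ∈ S.toFinset, (G.incidenceFinset v).card := Finset.card_biUnion_le
    _ ≤ ∑ v ∈ S.toFinset, d := by
        refine Finset.sum_le_sum fun v hv => ?_
        rw [card_incidenceFinset_eq_degree, ← card_neighborSet_eq_degree,
          ← Set.toFinset_card, ← Set.ncard_eq_toFinset_card']
        exact hd v (Set.mem_toFinset.mp hv)
    _ = d * S.ncard := by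
        rw [Finset.sum_const, smul_eq_mul, mul_comm, Set.ncard_eq_toFinset_card']
  calc G.edgeSet.ncard = G.edgeFinset.card := h1
    _ ≤ (B ∪ C).card := Finset.card_le_card hsub
    _ ≤ B.card + C.card := Finset.card_union_le _ _
    _ ≤ d * S.ncard + (G.induce Sᶜ).edgeSet.ncard := by rw [h2]; omega

/-- A finite nonempty acyclic graph has fewer edges than vertices. -/
lemma aux_forest_bound_gen : ∀ (n : ℕ) (V : Type u_1) [Fintype V] (G : SimpleGraph V),
    Nonempty V → G.IsAcyclic → Fintype.card V = n → G.edgeSet.ncard + 1 ≤ n := by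
  intro n
  induction n using Nat.strong_induction_on with
  | _ n ih =>
    intro V _ G hne hG hcard
    classical
    haveI := hne
    obtain ⟨v, hv⟩ := (by exact aux_exists_leaf hG : ∃ v : V, G.degree v ≤ 1)
    have hd : ∀ w ∈ ({v} : Set V), (G.neighborSet w).ncard ≤ 1 := by
      rintro w rfl
      rwa [Set.ncard_eq_toFinset_card', Set.toFinset_card, card_neighborSet_eq_degree]
    have hsplit := aux_edge_split G {v} 1 hd
    rw [Set.ncard_singleton, mul_one] at hsplit
    have hn1 : 1 ≤ n := by
      rw [← hcard]
      exact Fintype.card_pos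
    by_cases hVone : ∀ w : V, w = v
    · have hempty : G.edgeSet = ∅ := by
        ext e
        induction e with
        | _ x y =>
          simp only [mem_edgeSet, Set.mem_empty_iff_false, iff_false]
          intro hadj
          exact hadj.ne ((hVone x).trans (hVone y).symm)
      rw [hempty, Set.ncard_empty]
      omega
    · push_neg at hVone
      obtain ⟨w, hw⟩ := hVone
      have hne' : Nonempty ↥(({v} : Set V)ᶜ) := ⟨⟨w, hw⟩⟩
      have hcard' : Fintype.card ↥(({v} : Set V)ᶜ) = n - 1 := by
        rw [Fintype.card_compl_set, hcard]
        simp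
      have hrec := ih (n - 1) (by omega) ↥(({v} : Set V)ᶜ) (G.induce _) hne'
        (aux_isAcyclic_induce hG _) hcard'
      omega

lemma aux_forest_bound [Fintype V] [Nonempty V] (hG : G.IsAcyclic) :
    G.edgeSet.ncard + 1 ≤ Fintype.card V :=
  aux_forest_bound_gen _ V G ‹_› hG rfl

lemma aux_degree_nat (G : SimpleGraph V) (v : V) [Fintype (G.neighborSet v)] :
    G.degree v = Nat.card ↥(G.neighborSet v) := by
  rw [← card_neighborSet_eq_degree, Nat.card_eq_fintype_card]

end Aux

section Construction

/-- membership predicate for the decycling set, on ℕ coordinates. -/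
def inS (n a j : ℕ) : Prop :=
  (j = 0 ∧ a ≠ 2) ∨ (j = 1 ∧ a = 2) ∨ (2 ≤ j ∧ a = j % 2)

/-- rank function on ℕ coordinates. -/
def rk (n a j : ℕ) : ℕ :=
  if a = 2 then (if j = 0 then n + 1 else j + 1)
  else if j = 1 then a
  else if a = 1 ∧ j = 2 then 2
  else j + 2

/-- parent function on ℕ coordinates. -/
def par (n a j : ℕ) : ℕ × ℕ :=
  if a = 2 then (if j = 2 then (1, 2) else (2, if j = 0 then n - 1 else j - 1))
  else if j = 1 then (0, 1)
  else if a = 1 ∧ j = 2 then (1, 1)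
  else (2, j)

/-- ℕ-level adjacency in the cycle of length n. -/
def cadj (n j k : ℕ) : Prop :=
  (k = j + 1) ∨ (j = k + 1) ∨ (j = 0 ∧ k = n - 1) ∨ (k = 0 ∧ j = n - 1)

/-- ℕ-level adjacency in C3 □ Cn. -/
def adjN (n a j b k : ℕ) : Prop :=
  (a = b ∧ cadj n j k) ∨ (j = k ∧ a ≠ b)

set_option maxHeartbeats 1000000 in
lemma master1 {n a j b k : ℕ} (hn : 3 ≤ n) (ha : a < 3) (hb : b < 3)
    (hj : j < n) (hk : k < n) (hSa : ¬ inS n a j) (hSb : ¬ inS n b k)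
    (hadj : adjN n a j b k) : rk n a j ≠ rk n b k := by
  unfold inS adjN cadj at *
  unfold rk
  split_ifs <;> omega

set_option maxHeartbeats 1000000 in
lemma master2 {n a j b k : ℕ} (hn : 3 ≤ n) (ha : a < 3) (hb : b < 3)
    (hj : j < n) (hk : k < n) (hSa : ¬ inS n a j) (hSb : ¬ inS n b k)
    (hadj : adjN n a j b k) (hlt : rk n b k < rk n a j) :
    b = (par n a j).1 ∧ k = (par n a j).2 := by
  unfold inS adjN cadj at *
  unfold rk at hlt
  unfold par
  split_ifs at * <;> simp_all <;> omega

end Construction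

section Transfer

/-- Fin-level cycle adjacency implies ℕ-level. -/
lemma cycle_adj_to_nat {m : ℕ} {j k : Fin (m + 3)} (h : (cycleGraph (m + 3)).Adj j k) :
    cadj (m + 3) j.val k.val := by
  have h2 : j = k + 1 ∨ k = j + 1 := by
    rcases cycleGraph_adj.mp h with h' | h'
    · left; rw [sub_eq_iff_eq_add] at h'; exact h'.trans (add_comm 1 k)
    · right; rw [sub_eq_iff_eq_add] at h'; exact h'.trans (add_comm 1 j)
  unfold cadj
  rcases h2 with rfl | rfl
  · have hv := Fin.val_add_one k
    by_cases hl : k = Fin.last (m + 2)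
    · have hkv : k.val = m + 2 := by rw [hl]; simp
      rw [if_pos hl] at hv
      exact Or.inr (Or.inr (Or.inl ⟨hv, by omega⟩))
    · rw [if_neg hl] at hv
      exact Or.inr (Or.inl hv)
  · have hv := Fin.val_add_one j
    by_cases hl : j = Fin.last (m + 2)
    · have hjv : j.val = m + 2 := by rw [hl]; simp
      rw [if_pos hl] at hv
      exact Or.inr (Or.inr (Or.inr ⟨hv, by omega⟩))
    · rw [if_neg hl] at hv
      exact Or.inl hv

lemma box_adj_to_nat {m : ℕ} {p q : Fin 3 × Fin (m + 3)}
    (h : (cycleGraph 3 □ cycleGraph (m + 3)).Adj p q) :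
    adjN (m + 3) p.1.val p.2.val q.1.val q.2.val := by
  rcases boxProd_adj.mp h with ⟨h1, h2⟩ | ⟨h1, h2⟩
  · right
    refine ⟨by rw [h2], ?_⟩
    rw [cycleGraph_three_eq_top, top_adj] at h1
    simpa [Fin.val_eq_val] using h1
  · left
    exact ⟨by rw [h2], cycle_adj_to_nat h1⟩

end Transfer

section Main

/-- The concrete decycling set. -/
def S0 (n : ℕ) [NeZero n] : Set (Fin 3 × Fin n) := {p | inS n p.1.val p.2.val}

/-- the removed row in column `j`. -/
def rS (j : ℕ) : ℕ := if j = 0 then 0 else if j = 1 then 2 else j % 2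

lemma rS_lt (j : ℕ) : rS j < 3 := by
  unfold rS; split_ifs <;> omega

lemma S0_ncard (m : ℕ) : (S0 (m + 3)).ncard = (m + 3) + 1 := by
  classical
  set g : Fin (m + 3) → Fin 3 × Fin (m + 3) :=
    fun j => (⟨rS j.val, rS_lt j.val⟩, j) with hg
  have hginj : Function.Injective g := by
    intro i j hij
    exact congrArg Prod.snd hij
  have hS0 : S0 (m + 3) = insert ((1 : Fin 3), (0 : Fin (m + 3))) (Set.range g) := by
    ext ⟨a, j⟩
    simp only [S0, Set.mem_setOf_eq, Set.mem_insert_iff, Set.mem_range, hg, Prod.mk.injEq,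
      Prod.ext_iff]
    constructor
    · intro h
      unfold inS at h
      rcases h with ⟨hj, hane⟩ | ⟨hj, ha⟩ | ⟨hj, ha⟩
      · by_cases ha1 : a.val = 1
        · left
          refine ⟨Fin.ext ha1, Fin.ext (by simpa using hj)⟩
        · right
          refine ⟨j, Fin.ext ?_, rfl⟩
          show rS j.val = a.val
          have := a.isLt
          unfold rS
          rw [if_pos hj]
          omega
      · right
        refine ⟨j, Fin.ext ?_, rfl⟩
        show rS j.val = a.val
        unfold rS
        rw [if_neg (by omega), if_pos hj, ha]
      · right
        refine ⟨j, Fin.ext ?_, rfl⟩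
        show rS j.val = a.val
        unfold rS
        rw [if_neg (by omega), if_neg (by omega), ha]
    · intro h
      unfold inS
      rcases h with ⟨ha, hj⟩ | ⟨i, hi1, hi2⟩
      · have hav : a.val = 1 := by rw [ha]; rfl
        have hjv : j.val = 0 := by rw [hj]; rfl
        left; omega
      · have hav : a.val = rS j.val := by
          rw [← hi2, ← hi1]
        have := j.isLt
        unfold rS at hav
        by_cases hj0 : j.val = 0
        · rw [if_pos hj0] at hav; left; omega
        · rw [if_neg hj0] at hav
          by_cases hj1 : j.val = 1
          · rw [if_pos hj1] at hav; right; left; omega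
          · rw [if_neg hj1] at hav; right; right; omega
  rw [hS0]
  have hnotmem : ((1 : Fin 3), (0 : Fin (m + 3))) ∉ Set.range g := by
    rintro ⟨i, hi⟩
    have h2 : i = 0 := congrArg Prod.snd hi
    subst h2
    have h1 : (⟨rS (0 : Fin (m + 3)).val, rS_lt _⟩ : Fin 3) = 1 := congrArg Prod.fst hi
    have : rS 0 = 1 := by
      have := congrArg Fin.val h1
      simpa using this
    simp [rS] at this
  rw [Set.ncard_insert_of_notMem hnotmem]
  have : (Set.range g).ncard = m + 3 := by
    rw [← Set.image_univ, Set.ncard_image_of_injective _ hginj, Set.ncard_univ,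
      Nat.card_eq_fintype_card, Fintype.card_fin]
  omega

lemma S0_decycling (m : ℕ) :
    (cycleGraph 3 □ cycleGraph (m + 3)).IsDecyclingSet (S0 (m + 3)) := by
  show ((cycleGraph 3 □ cycleGraph (m + 3)).induce (S0 (m + 3))ᶜ).IsAcyclic
  apply isAcyclic_of_rank (fun v => rk (m + 3) v.1.1.val v.1.2.val)
  · rintro ⟨a, ha⟩ ⟨b, hb⟩ hadj
    have hadj' : (cycleGraph 3 □ cycleGraph (m + 3)).Adj a b := hadj
    exact master1 (by omega) a.1.isLt b.1.isLt a.2.isLt b.2.isLt ha hb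
      (box_adj_to_nat hadj')
  · rintro ⟨v, hv⟩ ⟨a, ha⟩ ⟨b, hb⟩ hadj1 hadj2 hlt1 hlt2
    have hadj1' : (cycleGraph 3 □ cycleGraph (m + 3)).Adj v a := hadj1
    have hadj2' : (cycleGraph 3 □ cycleGraph (m + 3)).Adj v b := hadj2
    have h1 := master2 (by omega) v.1.isLt a.1.isLt v.2.isLt a.2.isLt hv ha
      (box_adj_to_nat hadj1') hlt1
    have h2 := master2 (by omega) v.1.isLt b.1.isLt v.2.isLt b.2.isLt hv hb
      (box_adj_to_nat hadj2') hlt2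
    apply Subtype.ext
    apply Prod.ext <;> apply Fin.ext
    · rw [← h1.1] at h2; exact h2.1.symm
    · rw [← h1.2] at h2; exact h2.2.symm

lemma lower_bound (m : ℕ) (S : Set (Fin 3 × Fin (m + 3)))
    (hS : (cycleGraph 3 □ cycleGraph (m + 3)).IsDecyclingSet S) :
    (m + 3) + 1 ≤ S.ncard := by
  classical
  have hNat : ∀ x : Fin 3 × Fin (m + 3),
      Nat.card ↥((cycleGraph 3 □ cycleGraph (m + 3)).neighborSet x) = 4 := by
    intro x
    have h := degree_boxProd (G := cycleGraph 3) (H := cycleGraph (m + 3)) x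
    rw [cycleGraph_degree_three_le (n := 0), cycleGraph_degree_three_le (n := m)] at h
    rw [aux_degree_nat] at h
    omega
  have hdeg' : ∀ x ∈ S, ((cycleGraph 3 □ cycleGraph (m + 3)).neighborSet x).ncard ≤ 4 := by
    intro x _
    rw [← Nat.card_coe_set_eq, hNat]
  have hcardV : Fintype.card (Fin 3 × Fin (m + 3)) = 3 * (m + 3) := by
    simp [Fintype.card_prod]
  have hE : 2 * (cycleGraph 3 □ cycleGraph (m + 3)).edgeSet.ncard = 12 * (m + 3) := by
    have h1 : 12 * (m + 3) = 2 * (cycleGraph 3 □ cycleGraph (m + 3)).edgeFinset.card := by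
      rw [← sum_degrees_eq_twice_card_edges]
      simp only [aux_degree_nat, hNat, Finset.sum_const, Finset.card_univ, hcardV, smul_eq_mul]
      ring
    have h3 : (cycleGraph 3 □ cycleGraph (m + 3)).edgeSet.ncard
        = (cycleGraph 3 □ cycleGraph (m + 3)).edgeFinset.card := Set.ncard_eq_toFinset_card' _
    omega
  have hsplit := aux_edge_split (cycleGraph 3 □ cycleGraph (m + 3)) S 4 hdeg'
  by_cases hempty : Nonempty ↥(Sᶜ)
  · haveI := hempty
    have hforest := aux_forest_bound
      (G := (cycleGraph 3 □ cycleGraph (m + 3)).induce Sᶜ) hS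
    have hcardS : S.ncard = Fintype.card ↥S := by
      rw [Set.ncard_eq_toFinset_card', Set.toFinset_card]
    have hcardc : Fintype.card ↥(Sᶜ) = 3 * (m + 3) - S.ncard := by
      rw [Fintype.card_compl_set, hcardV, hcardS]
    have hklt : S.ncard ≤ 3 * (m + 3) := by
      rw [hcardS, ← hcardV]
      exact Fintype.card_le_of_injective Subtype.val Subtype.val_injective
    omega
  · have huniv : S = Set.univ := by
      rw [Set.eq_univ_iff_forall]
      intro x
      by_contra hx
      exact hempty ⟨⟨x, hx⟩⟩
    rw [huniv, Set.ncard_univ, Nat.card_eq_fintype_card, hcardV]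
    omega

end Main

/-- For every `n ≥ 3`, `∇(C₃ □ Cₙ) = n + 1`. -/
theorem decyclingNumber_C3_boxProd_Cn (n : ℕ) (hn : 3 ≤ n) :
    (cycleGraph 3 □ cycleGraph n).decyclingNumber = n + 1 := by
  obtain ⟨m, rfl⟩ : ∃ m, n = m + 3 := ⟨n - 3, by omega⟩
  haveI : NeZero (m + 3) := ⟨by omega⟩
  have hmem : (m + 3) + 1 ∈ {k | ∃ S : Set (Fin 3 × Fin (m + 3)),
      (cycleGraph 3 □ cycleGraph (m + 3)).IsDecyclingSet S ∧ S.ncard = k} :=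
    ⟨S0 (m + 3), S0_decycling m, S0_ncard m⟩
  unfold SimpleGraph.decyclingNumber
  refine le_antisymm (Nat.sInf_le hmem) ?_
  have hmem' := Nat.sInf_mem ⟨_, hmem⟩
  obtain ⟨S, hS, hc⟩ := hmem'
  rw [← hc]
  exact lower_bound m S hS
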